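/- A biquadratic tensor T is positive semi-definite if and only if all of its M-eigenvalues are nonnegative, and positive definite if and only if all of its M-eigenvalues are positive. -/
import Mathlib

noncomputable section

/-- A fourth order tensor `T` of size `d1 × d2 × d1 × d2` is biquadratic. -/
def Biquadratic {d1 d2 : ℕ} (T : Fin d1 → Fin d2 → Fin d1 → Fin d2 → ℝ) : Prop :=
  ∀ i j p q, T i j p q = T p j i q ∧ T i j p q = T p q i j

/-- `⟨T, x ⊗ y ⊗ x ⊗ y⟩`. -/
def bform {d1 d2 : ℕ} (T : Fin d1 → Fin d2 → Fin d1 → Fin d2 → ℝ)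
    (x : Fin d1 → ℝ) (y : Fin d2 → ℝ) : ℝ :=
  ∑ i, ∑ j, ∑ p, ∑ q, T i j p q * x i * y j * x p * y q

/-- `mu` is an M-eigenvalue of `T` with M-eigenvectors `x, y`. -/
def IsMEigen {d1 d2 : ℕ} (T : Fin d1 → Fin d2 → Fin d1 → Fin d2 → ℝ)
    (mu : ℝ) (x : Fin d1 → ℝ) (y : Fin d2 → ℝ) : Prop :=
  (∀ i, ∑ j, ∑ p, ∑ q, T i j p q * y j * x p * y q = mu * x i) ∧
  (∀ j, ∑ i, ∑ p, ∑ q, T i j p q * x i * x p * y q = mu * y j) ∧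
  (∑ i, x i ^ 2 = 1) ∧ (∑ j, y j ^ 2 = 1)

/-- `T` is positive semi-definite. -/
def PSDb {d1 d2 : ℕ} (T : Fin d1 → Fin d2 → Fin d1 → Fin d2 → ℝ) : Prop :=
  ∀ (x : Fin d1 → ℝ) (y : Fin d2 → ℝ), 0 ≤ bform T x y

/-- `T` is positive definite. -/
def PDb {d1 d2 : ℕ} (T : Fin d1 → Fin d2 → Fin d1 → Fin d2 → ℝ) : Prop :=
  ∀ (x : Fin d1 → ℝ) (y : Fin d2 → ℝ),
    (∑ i, x i ^ 2 = 1) → (∑ j, y j ^ 2 = 1) → 0 < bform T x y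

/- ### Auxiliary lemmas -/

lemma aux_eq_zero_of_sum_sq {n : ℕ} {x : Fin n → ℝ} (h : ∑ i, x i ^ 2 = 0) : x = 0 :=
  funext fun i => pow_eq_zero_iff (by norm_num : (2:ℕ) ≠ 0) |>.mp
    ((Finset.sum_eq_zero_iff_of_nonneg (fun i _ => sq_nonneg (x i))).mp h i (Finset.mem_univ i))

section helpers
variable {d1 d2 : ℕ} (T : Fin d1 → Fin d2 → Fin d1 → Fin d2 → ℝ)

lemma bform_smul_left (c : ℝ) (x : Fin d1 → ℝ) (y : Fin d2 → ℝ) :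
    bform T (c • x) y = c ^ 2 * bform T x y := by
  simp only [bform, Pi.smul_apply, smul_eq_mul, Finset.mul_sum]
  exact Finset.sum_congr rfl fun i _ => Finset.sum_congr rfl fun j _ =>
    Finset.sum_congr rfl fun p _ => Finset.sum_congr rfl fun q _ => by ring

lemma bform_smul_right (c : ℝ) (x : Fin d1 → ℝ) (y : Fin d2 → ℝ) :
    bform T x (c • y) = c ^ 2 * bform T x y := by
  simp only [bform, Pi.smul_apply, smul_eq_mul, Finset.mul_sum]
  exact Finset.sum_congr rfl fun i _ => Finset.sum_congr rfl fun j _ =>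
    Finset.sum_congr rfl fun p _ => Finset.sum_congr rfl fun q _ => by ring

lemma bform_zero_left (y : Fin d2 → ℝ) : bform T 0 y = 0 := by
  simp [bform]

lemma bform_eq_quad_left (x : Fin d1 → ℝ) (y : Fin d2 → ℝ) :
    bform T x y = ∑ i, ∑ p, (∑ j, ∑ q, T i j p q * y j * y q) * x i * x p := by
  unfold bform
  refine Finset.sum_congr rfl fun i _ => ?_
  rw [Finset.sum_comm]
  refine Finset.sum_congr rfl fun p _ => ?_
  simp only [Finset.sum_mul]
  exact Finset.sum_congr rfl fun j _ => Finset.sum_congr rfl fun q _ => by ring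

lemma bform_eq_quad_right (x : Fin d1 → ℝ) (y : Fin d2 → ℝ) :
    bform T x y = ∑ j, ∑ q, (∑ i, ∑ p, T i j p q * x i * x p) * y j * y q := by
  unfold bform
  rw [Finset.sum_comm]
  refine Finset.sum_congr rfl fun j _ => ?_
  have h1 : ∀ i : Fin d1, (∑ p, ∑ q, T i j p q * x i * y j * x p * y q)
      = ∑ q, ∑ p, T i j p q * x i * y j * x p * y q := fun i => Finset.sum_comm
  simp only [h1]
  rw [Finset.sum_comm]
  refine Finset.sum_congr rfl fun q _ => ?_
  simp only [Finset.sum_mul]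
  exact Finset.sum_congr rfl fun i _ => Finset.sum_congr rfl fun p _ => by ring

lemma bform_of_eigen {mu : ℝ} {x : Fin d1 → ℝ} {y : Fin d2 → ℝ}
    (h : IsMEigen T mu x y) : bform T x y = mu := by
  obtain ⟨h1, -, hx, -⟩ := h
  have e1 : bform T x y = ∑ i, x i * (∑ j, ∑ p, ∑ q, T i j p q * y j * x p * y q) := by
    unfold bform
    refine Finset.sum_congr rfl fun i _ => ?_
    simp only [Finset.mul_sum]
    exact Finset.sum_congr rfl fun j _ => Finset.sum_congr rfl fun p _ =>
      Finset.sum_congr rfl fun q _ => by ring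
  rw [e1]
  calc (∑ i, x i * (∑ j, ∑ p, ∑ q, T i j p q * y j * x p * y q))
      = ∑ i, x i * (mu * x i) := Finset.sum_congr rfl fun i _ => by rw [h1 i]
    _ = mu * ∑ i, x i ^ 2 := by
        rw [Finset.mul_sum]; exact Finset.sum_congr rfl fun i _ => by ring
    _ = mu := by rw [hx, mul_one]

end helpers

lemma quad_psd_kernel {n : ℕ} (B : Fin n → Fin n → ℝ) (hB : ∀ i p, B i p = B p i)
    (hpsd : ∀ x : Fin n → ℝ, 0 ≤ ∑ i, ∑ p, B i p * x i * x p)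
    (x₀ : Fin n → ℝ) (h0 : ∑ i, ∑ p, B i p * x₀ i * x₀ p = 0) :
    ∀ i, ∑ p, B i p * x₀ p = 0 := by
  intro i₀
  set z : Fin n → ℝ := Pi.single i₀ 1 with hz
  set L : ℝ := ∑ p, B i₀ p * x₀ p with hL
  set Qz : ℝ := ∑ i, ∑ p, B i p * z i * z p with hQz
  have hzval : ∀ p, z p = if p = i₀ then 1 else 0 := by
    intro p; simp [hz, Pi.single_apply]
  have expand : ∀ t : ℝ,
      (∑ i, ∑ p, B i p * (x₀ i + t * z i) * (x₀ p + t * z p))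
        = (∑ i, ∑ p, B i p * x₀ i * x₀ p)
          + t * (∑ i, ∑ p, B i p * x₀ i * z p)
          + t * (∑ i, ∑ p, B i p * z i * x₀ p)
          + t ^ 2 * Qz := by
    intro t
    simp only [Finset.mul_sum, ← Finset.sum_add_distrib, hQz]
    exact Finset.sum_congr rfl fun i _ => Finset.sum_congr rfl fun p _ => by ring
  have hL1 : (∑ i, ∑ p, B i p * x₀ i * z p) = L := by
    simp only [hzval, mul_ite, mul_one, mul_zero, Finset.sum_ite_eq', Finset.mem_univ,
      if_true]
    exact Finset.sum_congr rfl fun i _ => by rw [hB i i₀]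
  have hL2 : (∑ i, ∑ p, B i p * z i * x₀ p) = L := by
    rw [Finset.sum_comm]
    rw [show (∑ p, ∑ i, B i p * z i * x₀ p) = ∑ p, ∑ i, B p i * x₀ p * z i from
      Finset.sum_congr rfl fun p _ => Finset.sum_congr rfl fun i _ => by rw [hB i p]; ring]
    exact hL1
  have key : ∀ t : ℝ, 0 ≤ 2 * t * L + t ^ 2 * Qz := by
    intro t
    have h : 0 ≤ ∑ i, ∑ p, B i p * (x₀ i + t * z i) * (x₀ p + t * z p) := hpsd _
    rw [expand t, h0, hL1, hL2] at h
    linarith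
  have hQz0 : 0 ≤ Qz := hQz ▸ hpsd z
  have ht := key (-L / (Qz + 1))
  have hQ1 : (0:ℝ) < Qz + 1 := by linarith
  have hteq : 2 * (-L / (Qz + 1)) * L + (-L / (Qz + 1)) ^ 2 * Qz
      = -(L ^ 2 * (Qz + 2)) / (Qz + 1) ^ 2 := by field_simp; ring
  rw [hteq] at ht
  have h5 : (0:ℝ) ≤ -(L ^ 2 * (Qz + 2)) := by
    have h6 := (le_div_iff₀ (by positivity : (0:ℝ) < (Qz + 1) ^ 2)).mp ht
    linarith
  nlinarith [sq_nonneg L]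

/-- Existence of a minimiser of `bform` on the product of unit spheres. -/
lemma bform_exists_min {d1 d2 : ℕ} (hd1 : 0 < d1) (hd2 : 0 < d2)
    (T : Fin d1 → Fin d2 → Fin d1 → Fin d2 → ℝ) :
    ∃ x₀ y₀, (∑ i, x₀ i ^ 2 = 1) ∧ (∑ j, y₀ j ^ 2 = 1) ∧
      ∀ x y, (∑ i, x i ^ 2 = 1) → (∑ j, y j ^ 2 = 1) → bform T x₀ y₀ ≤ bform T x y := by
  have sphere_compact : ∀ n : ℕ, IsCompact {x : Fin n → ℝ | ∑ i, x i ^ 2 = 1} := by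
    intro n
    have hclosed : IsClosed {x : Fin n → ℝ | ∑ i, x i ^ 2 = 1} :=
      isClosed_eq (continuous_finset_sum _ fun i _ => (continuous_apply i).pow 2)
        continuous_const
    refine (isCompact_closedBall (0 : Fin n → ℝ) 1).of_isClosed_subset hclosed ?_
    intro x hx
    rw [Metric.mem_closedBall, dist_zero_right]
    rw [pi_norm_le_iff_of_nonneg zero_le_one]
    intro i
    have h1 : x i ^ 2 ≤ 1 := by
      rw [← hx]
      exact Finset.single_le_sum (fun i _ => sq_nonneg (x i)) (Finset.mem_univ i)
    rw [Real.norm_eq_abs]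
    exact (sq_le_one_iff_abs_le_one (x i)).mp h1
  have hsingle : ∀ (n : ℕ) (a : Fin n),
      ∑ i, (fun k => if k = a then (1:ℝ) else 0) i ^ 2 = 1 := by
    intro n a
    rw [Finset.sum_congr rfl (fun i _ => by
      by_cases h : i = a <;> simp [h] :
      ∀ i ∈ Finset.univ, (fun k => if k = a then (1:ℝ) else 0) i ^ 2 = if i = a then 1 else 0)]
    simp
  set S : Set ((Fin d1 → ℝ) × (Fin d2 → ℝ)) :=
    {x : Fin d1 → ℝ | ∑ i, x i ^ 2 = 1} ×ˢ {y : Fin d2 → ℝ | ∑ j, y j ^ 2 = 1} with hS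
  have hScompact : IsCompact S := (sphere_compact d1).prod (sphere_compact d2)
  have hSne : S.Nonempty :=
    ⟨((fun k => if k = (⟨0, hd1⟩ : Fin d1) then (1:ℝ) else 0),
      (fun k => if k = (⟨0, hd2⟩ : Fin d2) then (1:ℝ) else 0)),
      hsingle d1 _, hsingle d2 _⟩
  have hf : Continuous fun p : (Fin d1 → ℝ) × (Fin d2 → ℝ) => bform T p.1 p.2 := by
    unfold bform
    refine continuous_finset_sum _ fun i _ => continuous_finset_sum _ fun j _ =>
      continuous_finset_sum _ fun p _ => continuous_finset_sum _ fun q _ => ?_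
    exact ((((continuous_const.mul ((continuous_apply i).comp continuous_fst)).mul
      ((continuous_apply j).comp continuous_snd)).mul
      ((continuous_apply p).comp continuous_fst)).mul
      ((continuous_apply q).comp continuous_snd))
  obtain ⟨⟨x₀, y₀⟩, hmem, hmin⟩ := hScompact.exists_isMinOn hSne hf.continuousOn
  refine ⟨x₀, y₀, hmem.1, hmem.2, fun x y hx hy => ?_⟩
  exact isMinOn_iff.mp hmin (x, y) (Set.mk_mem_prod hx hy)

/-- Lower bound by homogeneity. -/
lemma bform_lower_global {d1 d2 : ℕ} (T : Fin d1 → Fin d2 → Fin d1 → Fin d2 → ℝ) (mu : ℝ)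
    (h : ∀ x y, (∑ i, x i ^ 2 = 1) → (∑ j, y j ^ 2 = 1) → mu ≤ bform T x y)
    (x : Fin d1 → ℝ) (y : Fin d2 → ℝ) :
    mu * ((∑ i, x i ^ 2) * (∑ j, y j ^ 2)) ≤ bform T x y := by
  by_cases hx : ∑ i, x i ^ 2 = 0
  · rw [aux_eq_zero_of_sum_sq hx]
    simp [bform]
  by_cases hy : ∑ j, y j ^ 2 = 0
  · rw [aux_eq_zero_of_sum_sq hy]
    simp [bform]
  have hsx : 0 < ∑ i, x i ^ 2 :=
    lt_of_le_of_ne (Finset.sum_nonneg fun i _ => sq_nonneg _) (Ne.symm hx)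
  have hsy : 0 < ∑ j, y j ^ 2 :=
    lt_of_le_of_ne (Finset.sum_nonneg fun j _ => sq_nonneg _) (Ne.symm hy)
  set sx := ∑ i, x i ^ 2
  set sy := ∑ j, y j ^ 2
  set cx : ℝ := (Real.sqrt sx)⁻¹ with hcx
  set cy : ℝ := (Real.sqrt sy)⁻¹ with hcy
  have hcx2 : cx ^ 2 = sx⁻¹ := by rw [hcx, inv_pow, Real.sq_sqrt hsx.le]
  have hcy2 : cy ^ 2 = sy⁻¹ := by rw [hcy, inv_pow, Real.sq_sqrt hsy.le]
  have hsum_smul : ∀ {n : ℕ} (c : ℝ) (w : Fin n → ℝ),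
      ∑ i, (c • w) i ^ 2 = c ^ 2 * ∑ i, w i ^ 2 := by
    intro n c w
    rw [Finset.mul_sum]
    exact Finset.sum_congr rfl fun i _ => by simp [mul_pow]
  have hux : ∑ i, (cx • x) i ^ 2 = 1 := by
    rw [hsum_smul, hcx2, inv_mul_cancel₀ hsx.ne']
  have huy : ∑ j, (cy • y) j ^ 2 = 1 := by
    rw [hsum_smul, hcy2, inv_mul_cancel₀ hsy.ne']
  have h1 := h (cx • x) (cy • y) hux huy
  rw [bform_smul_left, bform_smul_right, hcx2, hcy2] at h1
  have h2 : mu * (sx * sy) ≤ (sx⁻¹ * (sy⁻¹ * bform T x y)) * (sx * sy) :=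
    mul_le_mul_of_nonneg_right h1 (by positivity)
  have h3 : (sx⁻¹ * (sy⁻¹ * bform T x y)) * (sx * sy) = bform T x y := by
    field_simp
  linarith

/-- The minimiser on the product of unit spheres is an M-eigenpair. -/
lemma min_is_eigen {d1 d2 : ℕ} (T : Fin d1 → Fin d2 → Fin d1 → Fin d2 → ℝ)
    (hT : Biquadratic T) (x₀ : Fin d1 → ℝ) (y₀ : Fin d2 → ℝ)
    (hx₀ : ∑ i, x₀ i ^ 2 = 1) (hy₀ : ∑ j, y₀ j ^ 2 = 1)
    (hmin : ∀ x y, (∑ i, x i ^ 2 = 1) → (∑ j, y j ^ 2 = 1) → bform T x₀ y₀ ≤ bform T x y) :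
    IsMEigen T (bform T x₀ y₀) x₀ y₀ := by
  set mu := bform T x₀ y₀ with hmu
  have hglobal := bform_lower_global T mu hmin
  refine ⟨?_, ?_, hx₀, hy₀⟩
  · -- first eigen equation
    set B : Fin d1 → Fin d1 → ℝ :=
      fun i p => (∑ j, ∑ q, T i j p q * y₀ j * y₀ q) - (if i = p then mu else 0) with hBdef
    have hsym : ∀ i p, B i p = B p i := by
      intro i p
      simp only [hBdef]
      congr 1
      · exact Finset.sum_congr rfl fun j _ => Finset.sum_congr rfl fun q _ => by
          rw [(hT i j p q).1]
      · by_cases h : i = p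
        · subst h; rfl
        · rw [if_neg h, if_neg (Ne.symm h)]
    have hquad : ∀ x : Fin d1 → ℝ,
        (∑ i, ∑ p, B i p * x i * x p) = bform T x y₀ - mu * ∑ i, x i ^ 2 := by
      intro x
      rw [bform_eq_quad_left]
      have e1 : ∀ i ∈ Finset.univ, ∀ p ∈ Finset.univ, B i p * x i * x p
          = (∑ j, ∑ q, T i j p q * y₀ j * y₀ q) * x i * x p
            - (if i = p then mu else 0) * x i * x p := fun i _ p _ => by
        simp only [hBdef]; ring
      rw [Finset.sum_congr rfl fun i hi => Finset.sum_congr rfl fun p hp => e1 i hi p hp]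
      simp only [Finset.sum_sub_distrib]
      congr 1
      rw [Finset.mul_sum]
      refine Finset.sum_congr rfl fun i _ => ?_
      simp only [ite_mul, zero_mul, Finset.sum_ite_eq, Finset.mem_univ, if_true]
      ring
    have hpsd : ∀ x : Fin d1 → ℝ, 0 ≤ ∑ i, ∑ p, B i p * x i * x p := by
      intro x
      rw [hquad]
      have := hglobal x y₀
      rw [hy₀, mul_one] at this
      linarith
    have h0 : ∑ i, ∑ p, B i p * x₀ i * x₀ p = 0 := by
      rw [hquad, hx₀, mul_one, ← hmu, sub_self]
    have hker := quad_psd_kernel B hsym hpsd x₀ h0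
    intro i
    have h1 := hker i
    have e2 : ∀ p ∈ Finset.univ, B i p * x₀ p
        = (∑ j, ∑ q, T i j p q * y₀ j * y₀ q) * x₀ p
          - (if i = p then mu else 0) * x₀ p := fun p _ => by
      simp only [hBdef]; ring
    rw [Finset.sum_congr rfl e2, Finset.sum_sub_distrib] at h1
    have h2 : ∑ p, (if i = p then mu else 0) * x₀ p = mu * x₀ i := by
      simp [ite_mul, Finset.sum_ite_eq]
    rw [h2, sub_eq_zero] at h1
    have hre : (∑ j, ∑ p, ∑ q, T i j p q * y₀ j * x₀ p * y₀ q)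
        = ∑ p, (∑ j, ∑ q, T i j p q * y₀ j * y₀ q) * x₀ p := by
      rw [Finset.sum_comm]
      refine Finset.sum_congr rfl fun p _ => ?_
      simp only [Finset.sum_mul]
      exact Finset.sum_congr rfl fun j _ => Finset.sum_congr rfl fun q _ => by ring
    rw [hre, h1]
  · -- second eigen equation
    set C : Fin d2 → Fin d2 → ℝ :=
      fun j q => (∑ i, ∑ p, T i j p q * x₀ i * x₀ p) - (if j = q then mu else 0) with hCdef
    have hsym : ∀ j q, C j q = C q j := by
      intro j q
      simp only [hCdef]
      congr 1
      · calc (∑ i, ∑ p, T i j p q * x₀ i * x₀ p)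
            = ∑ i, ∑ p, T p q i j * x₀ i * x₀ p := by
              exact Finset.sum_congr rfl fun i _ => Finset.sum_congr rfl fun p _ => by
                rw [(hT i j p q).2]
          _ = ∑ p, ∑ i, T p q i j * x₀ i * x₀ p := Finset.sum_comm
          _ = ∑ i, ∑ p, T i q p j * x₀ i * x₀ p := by
              exact Finset.sum_congr rfl fun p _ => Finset.sum_congr rfl fun i _ => by ring
      · by_cases h : j = q
        · subst h; rfl
        · rw [if_neg h, if_neg (Ne.symm h)]
    have hquad : ∀ y : Fin d2 → ℝ,
        (∑ j, ∑ q, C j q * y j * y q) = bform T x₀ y - mu * ∑ j, y j ^ 2 := by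
      intro y
      rw [bform_eq_quad_right]
      have e1 : ∀ j ∈ Finset.univ, ∀ q ∈ Finset.univ, C j q * y j * y q
          = (∑ i, ∑ p, T i j p q * x₀ i * x₀ p) * y j * y q
            - (if j = q then mu else 0) * y j * y q := fun j _ q _ => by
        simp only [hCdef]; ring
      rw [Finset.sum_congr rfl fun j hj => Finset.sum_congr rfl fun q hq => e1 j hj q hq]
      simp only [Finset.sum_sub_distrib]
      congr 1
      rw [Finset.mul_sum]
      refine Finset.sum_congr rfl fun j _ => ?_
      simp only [ite_mul, zero_mul, Finset.sum_ite_eq, Finset.mem_univ, if_true]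
      ring
    have hpsd : ∀ y : Fin d2 → ℝ, 0 ≤ ∑ j, ∑ q, C j q * y j * y q := by
      intro y
      rw [hquad]
      have := hglobal x₀ y
      rw [hx₀, one_mul] at this
      linarith
    have h0 : ∑ j, ∑ q, C j q * y₀ j * y₀ q = 0 := by
      rw [hquad, hy₀, mul_one, ← hmu, sub_self]
    have hker := quad_psd_kernel C hsym hpsd y₀ h0
    intro j
    have h1 := hker j
    have e2 : ∀ q ∈ Finset.univ, C j q * y₀ q
        = (∑ i, ∑ p, T i j p q * x₀ i * x₀ p) * y₀ q
          - (if j = q then mu else 0) * y₀ q := fun q _ => by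
      simp only [hCdef]; ring
    rw [Finset.sum_congr rfl e2, Finset.sum_sub_distrib] at h1
    have h2 : ∑ q, (if j = q then mu else 0) * y₀ q = mu * y₀ j := by
      simp [ite_mul, Finset.sum_ite_eq]
    rw [h2, sub_eq_zero] at h1
    have hre : (∑ i, ∑ p, ∑ q, T i j p q * x₀ i * x₀ p * y₀ q)
        = ∑ q, (∑ i, ∑ p, T i j p q * x₀ i * x₀ p) * y₀ q := by
      have e3 : ∀ i : Fin d1, (∑ p, ∑ q, T i j p q * x₀ i * x₀ p * y₀ q)
          = ∑ q, ∑ p, T i j p q * x₀ i * x₀ p * y₀ q := fun i => Finset.sum_comm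
      simp only [e3]
      rw [Finset.sum_comm]
      refine Finset.sum_congr rfl fun q _ => ?_
      simp only [Finset.sum_mul]
    rw [hre, h1]

theorem stmt5 {d1 d2 : ℕ} (T : Fin d1 → Fin d2 → Fin d1 → Fin d2 → ℝ)
    (hT : Biquadratic T) :
    (PSDb T ↔ ∀ (mu : ℝ) (x : Fin d1 → ℝ) (y : Fin d2 → ℝ), IsMEigen T mu x y → 0 ≤ mu) ∧
    (PDb T ↔ ∀ (mu : ℝ) (x : Fin d1 → ℝ) (y : Fin d2 → ℝ), IsMEigen T mu x y → 0 < mu) := by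
  constructor
  · constructor
    · intro hpsd mu x y he
      exact bform_of_eigen T he ▸ hpsd x y
    · intro hall x y
      rcases Nat.eq_zero_or_pos d1 with hd1 | hd1
      · subst hd1; simp [bform]
      rcases Nat.eq_zero_or_pos d2 with hd2 | hd2
      · subst hd2; simp [bform]
      obtain ⟨x₀, y₀, hx₀, hy₀, hmin⟩ := bform_exists_min hd1 hd2 T
      have he := min_is_eigen T hT x₀ y₀ hx₀ hy₀ hmin
      have hmu : 0 ≤ bform T x₀ y₀ := hall _ _ _ he
      have := bform_lower_global T (bform T x₀ y₀) hmin x y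
      have hsq : 0 ≤ (∑ i, x i ^ 2) * (∑ j, y j ^ 2) := by positivity
      nlinarith
  · constructor
    · intro hpd mu x y he
      exact bform_of_eigen T he ▸ hpd x y he.2.2.1 he.2.2.2
    · intro hall x y hx hy
      rcases Nat.eq_zero_or_pos d1 with hd1 | hd1
      · subst hd1; simp at hx
      rcases Nat.eq_zero_or_pos d2 with hd2 | hd2
      · subst hd2; simp at hy
      obtain ⟨x₀, y₀, hx₀, hy₀, hmin⟩ := bform_exists_min hd1 hd2 T
      have he := min_is_eigen T hT x₀ y₀ hx₀ hy₀ hmin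
      have hmu : 0 < bform T x₀ y₀ := hall _ _ _ he
      exact lt_of_lt_of_le hmu (hmin x y hx hy)
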